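/- For every α ∈ ℂ and every (x,y,q) ∈ ℝ³, the series Σ_{k=0}^∞ (α^k/k!) (X_s^k e^{−q²/2})(x,y,q) converges absolutely and its sum equals e^{−q²/2} · e^{(1/2) α (i x − y)(2q + α y)}; in other words, e^{α X_s} e^{−q²/2} = e^{−q²/2} e^{(1/2) α (i x − y)(2q + α y)}. -/

import Mathlib

noncomputable section

open Complex Finset

/-- Points `(x, y, q)` of `ℝ³`. -/
abbrev P3 := ℝ × ℝ × ℝ

/-- Partial derivative with respect to `x`. -/
def pdx (f : P3 → ℂ) : P3 → ℂ := fun p => deriv (fun t => f (t, p.2.1, p.2.2)) p.1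

/-- Partial derivative with respect to `y`. -/
def pdy (f : P3 → ℂ) : P3 → ℂ := fun p => deriv (fun t => f (p.1, t, p.2.2)) p.2.1

/-- Partial derivative with respect to `q`. -/
def pdq (f : P3 → ℂ) : P3 → ℂ := fun p => deriv (fun t => f (p.1, p.2.1, t)) p.2.2

/-- The symplectic Dirac operator `D_s f = i q ∂_y f − ∂_x ∂_q f`. -/
def Ds (f : P3 → ℂ) : P3 → ℂ := fun p =>
  Complex.I * (p.2.2 : ℂ) * pdy f p - pdx (pdq f) p

/-- The operator `X_s f = y ∂_q f + i x q f`. -/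
def Xs (f : P3 → ℂ) : P3 → ℂ := fun p =>
  (p.2.1 : ℂ) * pdq f p + Complex.I * (p.1 : ℂ) * (p.2.2 : ℂ) * f p

/-- The Euler operator `E f = x ∂_x f + y ∂_y f`. -/
def Eul (f : P3 → ℂ) : P3 → ℂ := fun p =>
  (p.1 : ℂ) * pdx f p + (p.2.1 : ℂ) * pdy f p

/-- The Gaussian `e^{−q²/2}`, regarded as a function of `(x,y,q) ∈ ℝ³`. -/
def gauss : P3 → ℂ := fun p => Complex.exp (-(p.2.2 : ℂ) ^ 2 / 2)

namespace ExpXsAux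

/-- The Taylor coefficients of `exp (t*A + t^2*B)` at `t = 0`. -/
def sq {R : Type*} [CommRing R] (A B : R) : ℕ → R
  | 0 => 1
  | 1 => A
  | (k+2) => A * sq A B (k+1) + 2*B*((k : R)+1) * sq A B k

lemma sq_succ {R : Type*} [CommRing R] (A B : R) (k : ℕ) :
    sq A B (k+1) = A * sq A B k + 2*B*(k : R) * sq A B (k-1) := by
  cases k with
  | zero => simp [sq]
  | succ n =>
    show sq A B (n+2) = _
    simp only [sq, Nat.add_sub_cancel]
    push_cast
    ring

lemma hasDerivAt_sq (B : ℂ) (k : ℕ) :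
    ∀ z : ℂ, HasDerivAt (fun w => sq w B k) ((k : ℂ) * sq z B (k-1)) z := by
  induction k using Nat.twoStepInduction with
  | zero => intro z; simpa [sq] using hasDerivAt_const z (1:ℂ)
  | one => intro z; simpa [sq] using hasDerivAt_id' z
  | more n ih1 ih2 =>
    intro z
    have hfun : (fun w => sq w B (n+2)) =
        fun w => w * sq w B (n+1) + 2*B*((n : ℂ)+1) * sq w B n := by
      funext w; simp [sq]
    rw [hfun]
    have h := ((hasDerivAt_id z).mul (ih2 z)).add
      (HasDerivAt.const_mul (2*B*((n:ℂ)+1)) (ih1 z))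
    refine h.congr_deriv ?_
    simp only [show n + 2 - 1 = n + 1 from rfl, show n + 1 - 1 = n from rfl, id_eq]
    rw [sq_succ z B n]
    push_cast
    ring

lemma iteratedDeriv_add' {n : ℕ} {f g : ℂ → ℂ} (hf : ContDiff ℂ n f)
    (hg : ContDiff ℂ n g) (t : ℂ) :
    iteratedDeriv n (fun s => f s + g s) t = iteratedDeriv n f t + iteratedDeriv n g t := by
  simp only [iteratedDeriv_eq_iteratedFDeriv]
  rw [iteratedFDeriv_add_apply' hf.contDiffAt hg.contDiffAt]
  rfl

lemma iteratedDeriv_cmul {n : ℕ} {f : ℂ → ℂ} (hf : ContDiff ℂ n f) (c : ℂ) (t : ℂ) :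
    iteratedDeriv n (fun s => c * f s) t = c * iteratedDeriv n f t := by
  simp only [iteratedDeriv_eq_iteratedFDeriv]
  have h := iteratedFDeriv_const_smul_apply' (𝕜 := ℂ) (a := c) (f := f) (x := t) (i := n) hf.contDiffAt
  simp only [smul_eq_mul] at h
  rw [h]
  rfl

lemma deriv_lin_mul (A B : ℂ) {G : ℂ → ℂ} (hG : ContDiff ℂ (⊤ : ℕ∞) G) :
    deriv (fun s => (A + 2*B*s) * G s) =
      fun s => 2*B * G s + (A + 2*B*s) * deriv G s := by
  funext s
  have h1 : HasDerivAt (fun s : ℂ => A + 2*B*s) (2*B) s := by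
    simpa using (HasDerivAt.const_mul (2*B) (hasDerivAt_id s)).const_add A
  have h2 : HasDerivAt G (deriv G s) s :=
    (hG.differentiable (by simp) s).hasDerivAt
  have h3 := (h1.mul h2).deriv
  erw [h3]

lemma contDiff_lin_mul (A B : ℂ) {G : ℂ → ℂ} (hG : ContDiff ℂ (⊤ : ℕ∞) G) :
    ContDiff ℂ (⊤ : ℕ∞) (fun s => (A + 2*B*s) * G s) :=
  ((contDiff_const.add (contDiff_const.mul contDiff_id)).mul hG)

lemma iteratedDeriv_lin_mul (A B : ℂ) (n : ℕ) :
    ∀ (G : ℂ → ℂ), ContDiff ℂ (⊤ : ℕ∞) G → ∀ t : ℂ,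
    iteratedDeriv n (fun s => (A + 2*B*s) * G s) t
      = (A + 2*B*t) * iteratedDeriv n G t + 2*B*(n : ℂ) * iteratedDeriv (n-1) G t := by
  induction n with
  | zero => intro G hG t; simp
  | succ n ih =>
    intro G hG t
    have hG' : ContDiff ℂ (⊤ : ℕ∞) (deriv G) := (contDiff_infty_iff_deriv.mp hG).2
    rw [iteratedDeriv_succ', deriv_lin_mul A B hG]
    have h1 : ContDiff ℂ (n : ℕ∞) (fun s => 2*B * G s) :=
      contDiff_const.mul (hG.of_le (by exact_mod_cast le_top))
    have h2 : ContDiff ℂ (n : ℕ∞) (fun s => (A + 2*B*s) * deriv G s) :=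
      (contDiff_lin_mul A B hG').of_le (by exact_mod_cast le_top)
    rw [iteratedDeriv_add' h1 h2 t, iteratedDeriv_cmul (hG.of_le (by exact_mod_cast le_top)) (2*B) t,
      ih (deriv G) hG' t]
    cases n with
    | zero =>
      simp only [← iteratedDeriv_succ', Nat.cast_zero, Nat.cast_one, iteratedDeriv_zero,
        Nat.zero_add, Nat.add_sub_cancel, Nat.sub_self]
      ring
    | succ m =>
      rw [show m + 1 - 1 = m from rfl, ← iteratedDeriv_succ', ← iteratedDeriv_succ',
        show m + 1 + 1 - 1 = m + 1 from rfl]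
      push_cast
      ring

/-- The generating function. -/
def Fg (A B : ℂ) : ℂ → ℂ := fun t => Complex.exp (t*A + t^2*B)

lemma contDiff_Fg (A B : ℂ) : ContDiff ℂ (⊤ : ℕ∞) (Fg A B) :=
  ((contDiff_id.mul contDiff_const).add ((contDiff_id.pow 2).mul contDiff_const)).cexp

lemma hasDerivAt_Fg (A B t : ℂ) : HasDerivAt (Fg A B) ((A + 2*B*t) * Fg A B t) t := by
  have h : HasDerivAt (fun s : ℂ => s*A + s^2*B) (A + 2*B*t) t := by
    have h1 := (hasDerivAt_id t).mul_const A
    have h2 := (hasDerivAt_pow 2 t).mul_const B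
    refine (h1.add h2).congr_deriv ?_
    norm_num
    ring
  have h2 := h.cexp
  have h3 : Complex.exp (t*A + t^2*B) * (A + 2*B*t) = (A + 2*B*t) * Fg A B t := by
    simp only [Fg]; ring
  rw [h3] at h2
  exact h2

lemma deriv_Fg (A B : ℂ) : deriv (Fg A B) = fun t => (A + 2*B*t) * Fg A B t :=
  funext fun t => (hasDerivAt_Fg A B t).deriv

lemma iteratedDeriv_Fg (A B : ℂ) (k : ℕ) :
    iteratedDeriv k (Fg A B) 0 = sq A B k := by
  induction k using Nat.twoStepInduction with
  | zero => simp [Fg, sq]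
  | one =>
    rw [iteratedDeriv_one, deriv_Fg]
    simp [Fg, sq]
  | more n ih1 ih2 =>
    rw [iteratedDeriv_succ', deriv_Fg,
      iteratedDeriv_lin_mul A B (n+1) (Fg A B) (contDiff_Fg A B) 0]
    rw [show n + 1 - 1 = n from rfl, ih2, ih1]
    show _ = A * sq A B (n+1) + 2*B*((n : ℂ)+1) * sq A B n
    push_cast
    ring

lemma hasSum_sq (A B α : ℂ) :
    HasSum (fun k : ℕ => α ^ k / (Nat.factorial k : ℂ) * sq A B k)
      (Complex.exp (α*A + α^2*B)) := by
  have h := Complex.hasSum_taylorSeries_of_entire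
    ((contDiff_Fg A B).differentiable (by simp)) 0 α
  have he : (fun n : ℕ => ((n.factorial : ℂ))⁻¹ • (α - 0) ^ n • iteratedDeriv n (Fg A B) 0)
      = fun k : ℕ => α ^ k / (Nat.factorial k : ℂ) * sq A B k := by
    funext k
    rw [iteratedDeriv_Fg, smul_eq_mul, smul_eq_mul, sub_zero]
    ring
  rw [he] at h
  exact h

lemma sq_ofReal (a b : ℝ) (k : ℕ) :
    sq (a : ℂ) (b : ℂ) k = ((sq a b k : ℝ) : ℂ) := by
  induction k using Nat.twoStepInduction with
  | zero => simp [sq]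
  | one => simp [sq]
  | more n ih1 ih2 =>
    show (a:ℂ) * sq (a:ℂ) (b:ℂ) (n+1) + 2*(b:ℂ)*((n : ℂ)+1) * sq (a:ℂ) (b:ℂ) n = _
    rw [ih1, ih2]
    show _ = ((a * sq a b (n+1) + 2*b*((n : ℝ)+1) * sq a b n : ℝ) : ℂ)
    push_cast
    ring

lemma sq_nonneg' {a b : ℝ} (ha : 0 ≤ a) (hb : 0 ≤ b) (k : ℕ) : 0 ≤ sq a b k := by
  induction k using Nat.twoStepInduction with
  | zero => norm_num [sq]
  | one => simpa [sq] using ha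
  | more n ih1 ih2 =>
    show 0 ≤ a * sq a b (n+1) + 2*b*((n : ℝ)+1) * sq a b n
    have hn : (0:ℝ) ≤ (n : ℝ) + 1 := by positivity
    have := mul_nonneg ha ih2
    have := mul_nonneg (mul_nonneg (mul_nonneg (by norm_num : (0:ℝ) ≤ 2) hb) hn) ih1
    linarith

lemma norm_sq_le (A B : ℂ) (k : ℕ) : ‖sq A B k‖ ≤ sq ‖A‖ ‖B‖ k := by
  induction k using Nat.twoStepInduction with
  | zero => simp [sq]
  | one => simp [sq]
  | more n ih1 ih2 =>
    have hnrm : ‖(2*B*((n:ℂ)+1))‖ = 2*‖B‖*((n:ℝ)+1) := by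
      rw [norm_mul, norm_mul]
      rw [show ((n:ℂ)+1) = ((n+1 : ℕ) : ℂ) by push_cast; ring, Complex.norm_natCast]
      push_cast
      norm_num
    show ‖A * sq A B (n+1) + 2*B*((n : ℂ)+1) * sq A B n‖ ≤
      ‖A‖ * sq ‖A‖ ‖B‖ (n+1) + 2*‖B‖*((n : ℝ)+1) * sq ‖A‖ ‖B‖ n
    calc ‖A * sq A B (n+1) + 2*B*((n:ℂ)+1) * sq A B n‖
        ≤ ‖A * sq A B (n+1)‖ + ‖2*B*((n:ℂ)+1) * sq A B n‖ := norm_add_le _ _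
      _ = ‖A‖ * ‖sq A B (n+1)‖ + (2*‖B‖*((n:ℝ)+1)) * ‖sq A B n‖ := by
          rw [norm_mul, norm_mul, hnrm]
      _ ≤ ‖A‖ * sq ‖A‖ ‖B‖ (n+1) + (2*‖B‖*((n:ℝ)+1)) * sq ‖A‖ ‖B‖ n := by
          gcongr <;> first | exact ih2 | exact ih1 | positivity

lemma Xs_iter (k : ℕ) :
    Xs^[k] gauss = fun p : P3 =>
      sq ((Complex.I * (p.1 : ℂ) - (p.2.1 : ℂ)) * (p.2.2 : ℂ))
        ((Complex.I * (p.1 : ℂ) - (p.2.1 : ℂ)) * (p.2.1 : ℂ) / 2) k * gauss p := by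
  induction k with
  | zero => funext p; simp [sq]
  | succ n ih =>
    rw [Function.iterate_succ_apply', ih]
    funext p
    obtain ⟨x, y, q⟩ := p
    have hder : deriv (fun t : ℝ =>
        sq ((Complex.I * (x:ℂ) - (y:ℂ)) * (t:ℂ)) ((Complex.I * (x:ℂ) - (y:ℂ)) * (y:ℂ) / 2) n *
          Complex.exp (-(t:ℂ)^2/2)) q
        = ((n:ℂ) * sq ((Complex.I * (x:ℂ) - (y:ℂ)) * (q:ℂ))
              ((Complex.I * (x:ℂ) - (y:ℂ)) * (y:ℂ) / 2) (n-1) * (Complex.I * (x:ℂ) - (y:ℂ)))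
            * Complex.exp (-(q:ℂ)^2/2)
          + sq ((Complex.I * (x:ℂ) - (y:ℂ)) * (q:ℂ)) ((Complex.I * (x:ℂ) - (y:ℂ)) * (y:ℂ) / 2) n
            * (-(q:ℂ) * Complex.exp (-(q:ℂ)^2/2)) := by
      set c : ℂ := Complex.I * (x:ℂ) - (y:ℂ) with hc
      set B : ℂ := c * (y:ℂ) / 2 with hB
      have hin : HasDerivAt (fun w : ℂ => c * w) (c * 1) (q:ℂ) :=
        HasDerivAt.const_mul c (hasDerivAt_id (q:ℂ))
      have hg1 : HasDerivAt (fun w : ℂ => sq (c*w) B n)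
          (((n:ℂ) * sq (c*(q:ℂ)) B (n-1)) * (c * 1)) (q:ℂ) :=
        (hasDerivAt_sq B n (c*(q:ℂ))).comp (q:ℂ) hin
      have hg2 : HasDerivAt (fun w : ℂ => Complex.exp (-w^2/2))
          (-(q:ℂ) * Complex.exp (-(q:ℂ)^2/2)) (q:ℂ) := by
        have hpoly : HasDerivAt (fun w : ℂ => -w^2/2) (-(q:ℂ)) (q:ℂ) := by
          have h := ((hasDerivAt_pow 2 (q:ℂ)).neg).div_const 2
          refine h.congr_deriv ?_
          norm_num
          ring
        have h2 := hpoly.cexp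
        rw [mul_comm] at h2
        exact h2
      have hprod := (hg1.mul hg2).comp_ofReal
      have hd := hprod.deriv
      erw [hd]
      rw [mul_one]
    simp only [Xs, pdq, gauss]
    rw [hder, sq_succ]
    push_cast
    ring

end ExpXsAux

/-- The series `Σ_k (α^k/k!) X_s^k e^{−q²/2}` converges absolutely at every point and
`e^{α X_s} e^{−q²/2} = e^{−q²/2} e^{(1/2) α (ix−y)(2q+αy)}`. -/
theorem exp_Xs_gauss (α : ℂ) (p : P3) :
    Summable (fun k : ℕ => ‖α ^ k / (Nat.factorial k : ℂ) * (Xs^[k] gauss) p‖) ∧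
    ∑' k : ℕ, α ^ k / (Nat.factorial k : ℂ) * (Xs^[k] gauss) p =
      Complex.exp (-(p.2.2 : ℂ) ^ 2 / 2) *
        Complex.exp ((1 / 2) * α * (Complex.I * (p.1 : ℂ) - (p.2.1 : ℂ)) *
          (2 * (p.2.2 : ℂ) + α * (p.2.1 : ℂ))) := by
  set A : ℂ := (Complex.I * (p.1 : ℂ) - (p.2.1 : ℂ)) * (p.2.2 : ℂ) with hA
  set B : ℂ := (Complex.I * (p.1 : ℂ) - (p.2.1 : ℂ)) * (p.2.1 : ℂ) / 2 with hB
  have hXs : ∀ k : ℕ, (Xs^[k] gauss) p = ExpXsAux.sq A B k * gauss p := by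
    intro k
    rw [ExpXsAux.Xs_iter k]
  have hsum := ExpXsAux.hasSum_sq A B α
  constructor
  · have hreal : Summable
        (fun k : ℕ => ‖α‖^k / (Nat.factorial k : ℝ) * ExpXsAux.sq ‖A‖ ‖B‖ k) := by
      have h := (ExpXsAux.hasSum_sq (‖A‖:ℂ) (‖B‖:ℂ) (‖α‖:ℂ)).summable
      have he : (fun k : ℕ =>
          ((‖α‖:ℂ))^k / (Nat.factorial k : ℂ) * ExpXsAux.sq (‖A‖:ℂ) (‖B‖:ℂ) k)
          = fun k : ℕ =>
            ((‖α‖^k / (Nat.factorial k : ℝ) * ExpXsAux.sq ‖A‖ ‖B‖ k : ℝ) : ℂ) := by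
        funext k
        rw [ExpXsAux.sq_ofReal]
        push_cast
        ring
      rw [he] at h
      exact Complex.summable_ofReal.mp h
    refine Summable.of_nonneg_of_le (fun k => norm_nonneg _) (fun k => ?_)
      (hreal.mul_right ‖gauss p‖)
    rw [hXs k]
    calc ‖α^k/(Nat.factorial k : ℂ) * (ExpXsAux.sq A B k * gauss p)‖
        = (‖α‖^k/(Nat.factorial k : ℝ) * ‖ExpXsAux.sq A B k‖) * ‖gauss p‖ := by
          rw [← mul_assoc, norm_mul, norm_mul, norm_div, norm_pow, Complex.norm_natCast]
      _ ≤ (‖α‖^k/(Nat.factorial k : ℝ) * ExpXsAux.sq ‖A‖ ‖B‖ k) * ‖gauss p‖ := by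
          gcongr <;> first | exact ExpXsAux.norm_sq_le A B k | positivity
  · have h2 := hsum.mul_right (gauss p)
    have he : (fun k : ℕ => α^k / (Nat.factorial k : ℂ) * (Xs^[k] gauss) p)
        = fun k => (α^k / (Nat.factorial k : ℂ) * ExpXsAux.sq A B k) * gauss p := by
      funext k
      rw [hXs k]
      ring
    rw [he, h2.tsum_eq]
    rw [mul_comm]
    have hg : gauss p = Complex.exp (-(p.2.2 : ℂ) ^ 2 / 2) := rfl
    rw [hg]
    congr 1
    rw [hA, hB]
    ring
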